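/- With g₀ⁿ as above, for each 1 ≤ k ≤ n−6 the alternating bilinear map φ_{1,k} defined by φ_{1,k}(X₅, X₂) = φ_{1,k}(X₃, X₄) = Y_k (zero otherwise on basis pairs) is a 2-cocycle in Z²(g₀ⁿ, g₀ⁿ); similarly φ_{3,k} defined by φ_{3,k}(X₃, X₂) = Y_k is a 2-cocycle. -/
import Mathlib

private lemma add6 {M : Type*} [AddCommGroup M] (a1 a2 a3 a4 a5 a6 b1 b2 b3 b4 b5 b6 : M)
    (h1 : a1 + a2 + a3 + a4 + a5 + a6 = 0) (h2 : b1 + b2 + b3 + b4 + b5 + b6 = 0) :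
    (a1 + b1) + (a2 + b2) + (a3 + b3) + (a4 + b4) + (a5 + b5) + (a6 + b6) = 0 := by
  rw [show (a1 + b1) + (a2 + b2) + (a3 + b3) + (a4 + b4) + (a5 + b5) + (a6 + b6)
      = (a1 + a2 + a3 + a4 + a5 + a6) + (b1 + b2 + b3 + b4 + b5 + b6) by abel, h1, h2, add_zero]

private lemma smul6 {M : Type*} [AddCommGroup M] [Module ℂ M] (r : ℂ) (a1 a2 a3 a4 a5 a6 : M)
    (h : a1 + a2 + a3 + a4 + a5 + a6 = 0) :
    r • a1 + r • a2 + r • a3 + r • a4 + r • a5 + r • a6 = 0 := by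
  rw [show r • a1 + r • a2 + r • a3 + r • a4 + r • a5 + r • a6
      = r • (a1 + a2 + a3 + a4 + a5 + a6) by simp only [smul_add], h, smul_zero]

private lemma aux_basis {g : Type*} [LieRing g] [LieAlgebra ℂ g] (n : ℕ) (e : ℕ → g)
    (φ : g →ₗ[ℂ] g →ₗ[ℂ] g)
    (hzz : ∀ b c, 1 ≤ b → b ≤ n → 1 ≤ c → c ≤ n → b ≠ 1 → c ≠ 1 → ⁅e b, e c⁆ = 0)
    (hlie : ∀ a b c, 1 ≤ a → a ≤ n → 1 ≤ b → b ≤ n → 1 ≤ c → c ≤ n →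
      ⁅e c, φ (e a) (e b)⁆ = 0)
    (hsym : ∀ b c, 1 ≤ b → b ≤ n → 1 ≤ c → c ≤ n →
      φ (e c) ⁅e 1, e b⁆ = φ (e b) ⁅e 1, e c⁆) :
    ∀ a b c, 1 ≤ a → a ≤ n → 1 ≤ b → b ≤ n → 1 ≤ c → c ≤ n →
      ⁅e a, φ (e b) (e c)⁆ + ⁅e c, φ (e a) (e b)⁆ + ⁅e b, φ (e c) (e a)⁆ +
      φ (e a) ⁅e b, e c⁆ + φ (e c) ⁅e a, e b⁆ + φ (e b) ⁅e c, e a⁆ = 0 := by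
  intro a b c ha han hb1 hbn hc1 hcn
  rw [hlie b c a hb1 hbn hc1 hcn ha han, hlie a b c ha han hb1 hbn hc1 hcn,
      hlie c a b hc1 hcn ha han hb1 hbn]
  simp only [zero_add, add_zero]
  by_cases hA : a = 1 <;> by_cases hB : b = 1 <;> by_cases hC : c = 1
  · subst hA; subst hB; subst hC; simp [lie_self]
  · subst hA; subst hB
    rw [show ⁅e c, e 1⁆ = -⁅e 1, e c⁆ from (lie_skew _ _).symm]
    simp only [lie_self, map_zero, map_neg]
    abel
  · subst hA; subst hC
    rw [show ⁅e b, e 1⁆ = -⁅e 1, e b⁆ from (lie_skew _ _).symm]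
    simp only [lie_self, map_zero, map_neg]
    abel
  · subst hA
    rw [hzz b c hb1 hbn hc1 hcn hB hC,
        show ⁅e c, e 1⁆ = -⁅e 1, e c⁆ from (lie_skew _ _).symm,
        hsym b c hb1 hbn hc1 hcn]
    simp only [map_zero, map_neg]
    abel
  · subst hB; subst hC
    rw [show ⁅e a, e 1⁆ = -⁅e 1, e a⁆ from (lie_skew _ _).symm]
    simp only [lie_self, map_zero, map_neg]
    abel
  · subst hB
    rw [hzz c a hc1 hcn ha han hC hA,
        show ⁅e a, e 1⁆ = -⁅e 1, e a⁆ from (lie_skew _ _).symm]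
    simp only [map_zero, map_neg]
    rw [hsym a c ha han hc1 hcn]
    abel
  · subst hC
    rw [hzz a b ha han hb1 hbn hA hB,
        show ⁅e b, e 1⁆ = -⁅e 1, e b⁆ from (lie_skew _ _).symm,
        hsym a b ha han hb1 hbn]
    simp only [map_zero, map_neg]
    abel
  · rw [hzz b c hb1 hbn hc1 hcn hB hC, hzz a b ha han hb1 hbn hA hB,
        hzz c a hc1 hcn ha han hC hA]
    simp

private lemma aux_ext {g : Type*} [LieRing g] [LieAlgebra ℂ g] {n : ℕ} (e : ℕ → g)
    (hspan : Submodule.span ℂ (Set.range (fun i : Fin n => e (i.1 + 1))) = ⊤)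
    (φ : g →ₗ[ℂ] g →ₗ[ℂ] g)
    (hb : ∀ a b c, 1 ≤ a → a ≤ n → 1 ≤ b → b ≤ n → 1 ≤ c → c ≤ n →
      ⁅e a, φ (e b) (e c)⁆ + ⁅e c, φ (e a) (e b)⁆ + ⁅e b, φ (e c) (e a)⁆ +
      φ (e a) ⁅e b, e c⁆ + φ (e c) ⁅e a, e b⁆ + φ (e b) ⁅e c, e a⁆ = 0) :
    ∀ x y z : g,
      ⁅x, φ y z⁆ + ⁅z, φ x y⁆ + ⁅y, φ z x⁆ +
        φ x ⁅y, z⁆ + φ z ⁅x, y⁆ + φ y ⁅z, x⁆ = 0 := by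
  have hmem : ∀ w : g, w ∈ Submodule.span ℂ (Set.range (fun i : Fin n => e (i.1 + 1))) :=
    fun w => hspan ▸ Submodule.mem_top
  have h1 : ∀ a b : ℕ, 1 ≤ a → a ≤ n → 1 ≤ b → b ≤ n → ∀ z : g,
      ⁅e a, φ (e b) z⁆ + ⁅z, φ (e a) (e b)⁆ + ⁅e b, φ z (e a)⁆ +
        φ (e a) ⁅e b, z⁆ + φ z ⁅e a, e b⁆ + φ (e b) ⁅z, e a⁆ = 0 := by
    intro a b ha han hb1 hbn z
    induction hmem z using Submodule.span_induction with
    | mem w hw =>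
      obtain ⟨i, rfl⟩ := hw
      exact hb a b (i.1 + 1) ha han hb1 hbn (by omega) i.2
    | zero => simp
    | add u v hu hv ihu ihv =>
      simp only [map_add, LinearMap.add_apply, lie_add, add_lie]
      exact add6 _ _ _ _ _ _ _ _ _ _ _ _ ihu ihv
    | smul r u hu ih =>
      simp only [map_smul, LinearMap.smul_apply, lie_smul, smul_lie]
      exact smul6 r _ _ _ _ _ _ ih
  have h2 : ∀ a : ℕ, 1 ≤ a → a ≤ n → ∀ y z : g,
      ⁅e a, φ y z⁆ + ⁅z, φ (e a) y⁆ + ⁅y, φ z (e a)⁆ +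
        φ (e a) ⁅y, z⁆ + φ z ⁅e a, y⁆ + φ y ⁅z, e a⁆ = 0 := by
    intro a ha han y
    induction hmem y using Submodule.span_induction with
    | mem w hw =>
      obtain ⟨i, rfl⟩ := hw
      exact h1 a (i.1 + 1) ha han (by omega) i.2
    | zero => intro z; simp
    | add u v hu hv ihu ihv =>
      intro z
      simp only [map_add, LinearMap.add_apply, lie_add, add_lie]
      exact add6 _ _ _ _ _ _ _ _ _ _ _ _ (ihu z) (ihv z)
    | smul r u hu ih =>
      intro z
      simp only [map_smul, LinearMap.smul_apply, lie_smul, smul_lie]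
      exact smul6 r _ _ _ _ _ _ (ih z)
  intro x
  induction hmem x using Submodule.span_induction with
  | mem w hw =>
    obtain ⟨i, rfl⟩ := hw
    exact h2 (i.1 + 1) (by omega) i.2
  | zero => intro y z; simp
  | add u v hu hv ihu ihv =>
    intro y z
    simp only [map_add, LinearMap.add_apply, lie_add, add_lie]
    exact add6 _ _ _ _ _ _ _ _ _ _ _ _ (ihu y z) (ihv y z)
  | smul r u hu ih =>
    intro y z
    simp only [map_smul, LinearMap.smul_apply, lie_smul, smul_lie]
    exact smul6 r _ _ _ _ _ _ (ih y z)

/-- with `g₀ⁿ` as in Statement 10 (basis `e 1, ..., e n`,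
`Y_k = e (6+k)`), for each `1 ≤ k ≤ n-6` the alternating bilinear map `φ_{1,k}` with
`φ_{1,k} (X₅, X₂) = φ_{1,k} (X₃, X₄) = Y_k` (zero on the other basis pairs) is a
`2`-cocycle with adjoint coefficients, and likewise the map `φ_{3,k}` with
`φ_{3,k} (X₃, X₂) = Y_k` is a `2`-cocycle. -/
theorem stmt11 (n : ℕ) (hn : 7 ≤ n) (g : Type*) [LieRing g] [LieAlgebra ℂ g]
    (e : ℕ → g)
    (hindep : LinearIndependent ℂ (fun i : Fin n => e (i.1 + 1)))
    (hspan : Submodule.span ℂ (Set.range (fun i : Fin n => e (i.1 + 1))) = ⊤)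
    (hbr : ∀ j, 2 ≤ j → j ≤ 5 → ⁅e 1, e j⁆ = e (j + 1))
    (hbr0 : ∀ i j, 1 ≤ i → i < j → j ≤ n → ¬(i = 1 ∧ 2 ≤ j ∧ j ≤ 5) → ⁅e i, e j⁆ = 0) :
    (∀ k, 1 ≤ k → k ≤ n - 6 → ∀ φ : g →ₗ[ℂ] g →ₗ[ℂ] g,
      (∀ x : g, φ x x = 0) →
      φ (e 5) (e 2) = e (6 + k) →
      φ (e 3) (e 4) = e (6 + k) →
      (∀ i j, 1 ≤ i → 1 ≤ j → i ≤ n → j ≤ n →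
        ¬((i = 5 ∧ j = 2) ∨ (i = 2 ∧ j = 5) ∨ (i = 3 ∧ j = 4) ∨ (i = 4 ∧ j = 3)) →
        φ (e i) (e j) = 0) →
      ∀ x y z : g,
        ⁅x, φ y z⁆ + ⁅z, φ x y⁆ + ⁅y, φ z x⁆ +
          φ x ⁅y, z⁆ + φ z ⁅x, y⁆ + φ y ⁅z, x⁆ = 0) ∧
    (∀ k, 1 ≤ k → k ≤ n - 6 → ∀ φ : g →ₗ[ℂ] g →ₗ[ℂ] g,
      (∀ x : g, φ x x = 0) →
      φ (e 3) (e 2) = e (6 + k) →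
      (∀ i j, 1 ≤ i → 1 ≤ j → i ≤ n → j ≤ n →
        ¬((i = 3 ∧ j = 2) ∨ (i = 2 ∧ j = 3)) →
        φ (e i) (e j) = 0) →
      ∀ x y z : g,
        ⁅x, φ y z⁆ + ⁅z, φ x y⁆ + ⁅y, φ z x⁆ +
          φ x ⁅y, z⁆ + φ z ⁅x, y⁆ + φ y ⁅z, x⁆ = 0) := by
  -- shared bracket lemmas
  have hzz : ∀ b c, 1 ≤ b → b ≤ n → 1 ≤ c → c ≤ n → b ≠ 1 → c ≠ 1 → ⁅e b, e c⁆ = 0 := by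
    intro b c hb1 hbn hc1 hcn hbne hcne
    rcases lt_trichotomy b c with h | h | h
    · exact hbr0 b c hb1 h hcn (by omega)
    · rw [h]; exact lie_self _
    · rw [← lie_skew, hbr0 c b hc1 h hbn (by omega), neg_zero]
  have br1 : ∀ j, 1 ≤ j → j ≤ n → ¬(2 ≤ j ∧ j ≤ 5) → ⁅e 1, e j⁆ = 0 := by
    intro j h1 h2 h3
    rcases eq_or_lt_of_le h1 with h | h
    · rw [← h]; exact lie_self _
    · exact hbr0 1 j le_rfl h h2 (by omega)
  constructor
  · intro k hk1 hk2 φ halt hv52 hv34 h0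
    have hsk : ∀ x y : g, φ x y = -φ y x := by
      intro x y
      have h := halt (x + y)
      simp only [map_add, LinearMap.add_apply, halt, zero_add, add_zero] at h
      rw [eq_neg_iff_add_eq_zero, add_comm]
      exact h
    have hv25 : φ (e 2) (e 5) = -e (6 + k) := by rw [hsk, hv52]
    have hv43 : φ (e 4) (e 3) = -e (6 + k) := by rw [hsk, hv34]
    have h6k : 6 + k ≤ n := by omega
    have lieY : ∀ c, 1 ≤ c → c ≤ n → ⁅e c, e (6 + k)⁆ = 0 := by
      intro c hc1 hcn
      rcases lt_trichotomy c (6 + k) with h | h | h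
      · exact hbr0 c (6 + k) hc1 h h6k (by omega)
      · rw [h]; exact lie_self _
      · rw [← lie_skew, hbr0 (6 + k) c (by omega) h hcn (by omega), neg_zero]
    have hlie : ∀ a b c, 1 ≤ a → a ≤ n → 1 ≤ b → b ≤ n → 1 ≤ c → c ≤ n →
        ⁅e c, φ (e a) (e b)⁆ = 0 := by
      intro a b c ha han hb1 hbn hc1 hcn
      by_cases h : (a = 5 ∧ b = 2) ∨ (a = 2 ∧ b = 5) ∨ (a = 3 ∧ b = 4) ∨ (a = 4 ∧ b = 3)
      · rcases h with ⟨rfl, rfl⟩ | ⟨rfl, rfl⟩ | ⟨rfl, rfl⟩ | ⟨rfl, rfl⟩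
        · rw [hv52]; exact lieY c hc1 hcn
        · rw [hv25, lie_neg, lieY c hc1 hcn, neg_zero]
        · rw [hv34]; exact lieY c hc1 hcn
        · rw [hv43, lie_neg, lieY c hc1 hcn, neg_zero]
      · rw [h0 a b ha hb1 han hbn h, lie_zero]
    have Z : ∀ i j, 1 ≤ i → i ≤ 6 → 1 ≤ j → j ≤ 6 →
        ¬((i = 5 ∧ j = 2) ∨ (i = 2 ∧ j = 5) ∨ (i = 3 ∧ j = 4) ∨ (i = 4 ∧ j = 3)) →
        φ (e i) (e j) = 0 :=
      fun i j a b cc d h => h0 i j a cc (by omega) (by omega) h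
    have V23 : φ (e 2) (e 3) = 0 := Z 2 3 (by omega) (by omega) (by omega) (by omega) (by omega)
    have V24 : φ (e 2) (e 4) = 0 := Z 2 4 (by omega) (by omega) (by omega) (by omega) (by omega)
    have V26 : φ (e 2) (e 6) = 0 := Z 2 6 (by omega) (by omega) (by omega) (by omega) (by omega)
    have V33 : φ (e 3) (e 3) = 0 := halt (e 3)
    have V35 : φ (e 3) (e 5) = 0 := Z 3 5 (by omega) (by omega) (by omega) (by omega) (by omega)
    have V36 : φ (e 3) (e 6) = 0 := Z 3 6 (by omega) (by omega) (by omega) (by omega) (by omega)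
    have V44 : φ (e 4) (e 4) = 0 := halt (e 4)
    have V45 : φ (e 4) (e 5) = 0 := Z 4 5 (by omega) (by omega) (by omega) (by omega) (by omega)
    have V46 : φ (e 4) (e 6) = 0 := Z 4 6 (by omega) (by omega) (by omega) (by omega) (by omega)
    have V53 : φ (e 5) (e 3) = 0 := Z 5 3 (by omega) (by omega) (by omega) (by omega) (by omega)
    have V54 : φ (e 5) (e 4) = 0 := Z 5 4 (by omega) (by omega) (by omega) (by omega) (by omega)
    have V55 : φ (e 5) (e 5) = 0 := halt (e 5)
    have V56 : φ (e 5) (e 6) = 0 := Z 5 6 (by omega) (by omega) (by omega) (by omega) (by omega)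
    have hsym : ∀ b c, 1 ≤ b → b ≤ n → 1 ≤ c → c ≤ n →
        φ (e c) ⁅e 1, e b⁆ = φ (e b) ⁅e 1, e c⁆ := by
      intro b c hb1 hbn hc1 hcn
      by_cases hbb : 2 ≤ b ∧ b ≤ 5 <;> by_cases hcc : 2 ≤ c ∧ c ≤ 5
      · obtain ⟨hb2, hb5⟩ := hbb; obtain ⟨hc2, hc5⟩ := hcc
        rw [hbr b hb2 hb5, hbr c hc2 hc5]
        interval_cases b <;> interval_cases c <;>
          norm_num [V23, V24, hv25, V26, V33, hv34, V35, V36, hv43, V44, V45, V46,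
            V53, V54, V55, V56]
      · rw [hbr b hbb.1 hbb.2, br1 c hc1 hcn hcc, map_zero]
        exact h0 c (b + 1) hc1 (by omega) hcn (by omega) (by omega)
      · rw [br1 b hb1 hbn hbb, map_zero, hbr c hcc.1 hcc.2]
        exact (h0 b (c + 1) hb1 (by omega) hbn (by omega) (by omega)).symm
      · rw [br1 b hb1 hbn hbb, br1 c hc1 hcn hcc, map_zero, map_zero]
    exact aux_ext e hspan φ (aux_basis n e φ hzz hlie hsym)
  · intro k hk1 hk2 φ halt hv32 h0
    have hsk : ∀ x y : g, φ x y = -φ y x := by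
      intro x y
      have h := halt (x + y)
      simp only [map_add, LinearMap.add_apply, halt, zero_add, add_zero] at h
      rw [eq_neg_iff_add_eq_zero, add_comm]
      exact h
    have hv23 : φ (e 2) (e 3) = -e (6 + k) := by rw [hsk, hv32]
    have h6k : 6 + k ≤ n := by omega
    have lieY : ∀ c, 1 ≤ c → c ≤ n → ⁅e c, e (6 + k)⁆ = 0 := by
      intro c hc1 hcn
      rcases lt_trichotomy c (6 + k) with h | h | h
      · exact hbr0 c (6 + k) hc1 h h6k (by omega)
      · rw [h]; exact lie_self _
      · rw [← lie_skew, hbr0 (6 + k) c (by omega) h hcn (by omega), neg_zero]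
    have hlie : ∀ a b c, 1 ≤ a → a ≤ n → 1 ≤ b → b ≤ n → 1 ≤ c → c ≤ n →
        ⁅e c, φ (e a) (e b)⁆ = 0 := by
      intro a b c ha han hb1 hbn hc1 hcn
      by_cases h : (a = 3 ∧ b = 2) ∨ (a = 2 ∧ b = 3)
      · rcases h with ⟨rfl, rfl⟩ | ⟨rfl, rfl⟩
        · rw [hv32]; exact lieY c hc1 hcn
        · rw [hv23, lie_neg, lieY c hc1 hcn, neg_zero]
      · rw [h0 a b ha hb1 han hbn h, lie_zero]
    have Z : ∀ i j, 1 ≤ i → i ≤ 6 → 1 ≤ j → j ≤ 6 →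
        ¬((i = 3 ∧ j = 2) ∨ (i = 2 ∧ j = 3)) →
        φ (e i) (e j) = 0 :=
      fun i j a b cc d h => h0 i j a cc (by omega) (by omega) h
    have V24 : φ (e 2) (e 4) = 0 := Z 2 4 (by omega) (by omega) (by omega) (by omega) (by omega)
    have V25 : φ (e 2) (e 5) = 0 := Z 2 5 (by omega) (by omega) (by omega) (by omega) (by omega)
    have V26 : φ (e 2) (e 6) = 0 := Z 2 6 (by omega) (by omega) (by omega) (by omega) (by omega)
    have V33 : φ (e 3) (e 3) = 0 := halt (e 3)
    have V34 : φ (e 3) (e 4) = 0 := Z 3 4 (by omega) (by omega) (by omega) (by omega) (by omega)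
    have V35 : φ (e 3) (e 5) = 0 := Z 3 5 (by omega) (by omega) (by omega) (by omega) (by omega)
    have V36 : φ (e 3) (e 6) = 0 := Z 3 6 (by omega) (by omega) (by omega) (by omega) (by omega)
    have V43 : φ (e 4) (e 3) = 0 := Z 4 3 (by omega) (by omega) (by omega) (by omega) (by omega)
    have V44 : φ (e 4) (e 4) = 0 := halt (e 4)
    have V45 : φ (e 4) (e 5) = 0 := Z 4 5 (by omega) (by omega) (by omega) (by omega) (by omega)
    have V46 : φ (e 4) (e 6) = 0 := Z 4 6 (by omega) (by omega) (by omega) (by omega) (by omega)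
    have V53 : φ (e 5) (e 3) = 0 := Z 5 3 (by omega) (by omega) (by omega) (by omega) (by omega)
    have V54 : φ (e 5) (e 4) = 0 := Z 5 4 (by omega) (by omega) (by omega) (by omega) (by omega)
    have V55 : φ (e 5) (e 5) = 0 := halt (e 5)
    have V56 : φ (e 5) (e 6) = 0 := Z 5 6 (by omega) (by omega) (by omega) (by omega) (by omega)
    have hsym : ∀ b c, 1 ≤ b → b ≤ n → 1 ≤ c → c ≤ n →
        φ (e c) ⁅e 1, e b⁆ = φ (e b) ⁅e 1, e c⁆ := by
      intro b c hb1 hbn hc1 hcn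
      by_cases hbb : 2 ≤ b ∧ b ≤ 5 <;> by_cases hcc : 2 ≤ c ∧ c ≤ 5
      · obtain ⟨hb2, hb5⟩ := hbb; obtain ⟨hc2, hc5⟩ := hcc
        rw [hbr b hb2 hb5, hbr c hc2 hc5]
        interval_cases b <;> interval_cases c <;>
          norm_num [hv23, V24, V25, V26, V33, V34, V35, V36, V43, V44, V45, V46,
            V53, V54, V55, V56]
      · rw [hbr b hbb.1 hbb.2, br1 c hc1 hcn hcc, map_zero]
        exact h0 c (b + 1) hc1 (by omega) hcn (by omega) (by omega)
      · rw [br1 b hb1 hbn hbb, map_zero, hbr c hcc.1 hcc.2]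
        exact (h0 b (c + 1) hb1 (by omega) hbn (by omega) (by omega)).symm
      · rw [br1 b hb1 hbn hbb, br1 c hc1 hcn hcc, map_zero, map_zero]
    exact aux_ext e hspan φ (aux_basis n e φ hzz hlie hsym)
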